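/- Let (v1,...,vn,d) be positive integers with v_i < d. The rational function ρ_{(v,d)}(t) = ∏_{i=1}^n (t^d − t^{v_i})/(t^{v_i} − 1) is a polynomial with integer coefficients if and only if for every subset J ⊆ {1,...,n}, the number gcd(v_j : j ∈ J) divides at least |J| of the n numbers d − v_1, ..., d − v_n. -/

import Mathlib

open Polynomial

private lemma auxXne {a : ℕ} (ha : 0 < a) : ((X : ℂ[X]) ^ a - 1) ≠ 0 := by
  simpa using Polynomial.X_pow_sub_C_ne_zero ha (1 : ℂ)

private lemma auxRM {m a : ℕ} (ha : 0 < a) {ζ : ℂ}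
    (hζ : IsPrimitiveRoot ζ m) :
    rootMultiplicity ζ ((X : ℂ[X]) ^ a - 1) = if m ∣ a then 1 else 0 := by
  by_cases h : m ∣ a
  · rw [if_pos h]
    have hroot : IsRoot ((X : ℂ[X]) ^ a - 1) ζ := by
      simp [IsRoot.def, sub_eq_zero, (hζ.pow_eq_one_iff_dvd a).mpr h]
    have h1 : 1 ≤ rootMultiplicity ζ ((X : ℂ[X]) ^ a - 1) :=
      (rootMultiplicity_pos (auxXne ha)).mpr hroot
    have h2 : rootMultiplicity ζ ((X : ℂ[X]) ^ a - 1) ≤ 1 :=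
      rootMultiplicity_le_one_of_separable
        (X_pow_sub_one_separable_iff.mpr (Nat.cast_ne_zero.mpr ha.ne')) ζ
    omega
  · rw [if_neg h]
    refine rootMultiplicity_eq_zero fun hr => h ?_
    have : ζ ^ a = 1 := by
      have := hr
      simp only [IsRoot.def, eval_sub, eval_pow, eval_X, eval_one, sub_eq_zero] at this
      exact this
    exact (hζ.pow_eq_one_iff_dvd a).mp this

private lemma auxRMprod {ι : Type*} (s : Finset ι) (f : ι → ℂ[X])
    (h : ∀ i ∈ s, f i ≠ 0) (x : ℂ) :
    rootMultiplicity x (∏ i ∈ s, f i) = ∑ i ∈ s, rootMultiplicity x (f i) := by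
  classical
  induction s using Finset.induction with
  | empty => simp
  | @insert a s ha ih =>
    rw [Finset.prod_insert ha, Finset.sum_insert ha,
      rootMultiplicity_mul
        (mul_ne_zero (h a (Finset.mem_insert_self a s))
          (Finset.prod_ne_zero_iff.mpr fun i hi => h i (Finset.mem_insert_of_mem hi))),
      ih fun i hi => h i (Finset.mem_insert_of_mem hi)]

theorem stmt15 (n : ℕ) (v : Fin n → ℕ) (d : ℕ)
    (hv : ∀ i, 0 < v i) (hvd : ∀ i, v i < d) :
    (∃ p : Polynomial ℤ,
      ∏ i, ((X : Polynomial ℤ) ^ d - X ^ (v i)) = p * ∏ i, ((X : Polynomial ℤ) ^ (v i) - 1)) ↔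
    ∀ J : Finset (Fin n),
      J.card ≤ (Finset.univ.filter (fun k => Finset.gcd J v ∣ (d - v k))).card := by
  classical
  constructor
  · rintro ⟨p, hp⟩ J
    rcases Finset.eq_empty_or_nonempty J with rfl | ⟨j0, hj0⟩
    · simp
    set m := Finset.gcd J v with hmdef
    have hm0 : 0 < m := by
      rcases Nat.eq_zero_or_pos m with h | h
      · exact absurd (Finset.gcd_eq_zero_iff.mp h j0 hj0) (hv j0).ne'
      · exact h
    have hsub : J ⊆ Finset.univ.filter (fun i => m ∣ v i) := fun j hj =>
      Finset.mem_filter.mpr ⟨Finset.mem_univ _, Finset.gcd_dvd hj⟩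
    refine le_trans (Finset.card_le_card hsub) ?_
    set ζ : ℂ := Complex.exp (2 * Real.pi * Complex.I / m) with hζdef
    have hζ : IsPrimitiveRoot ζ m := Complex.isPrimitiveRoot_exp m hm0.ne'
    have hζ0 : ζ ≠ 0 := Complex.exp_ne_zero _
    have key : ∀ i, ((X : ℂ[X]) ^ d - X ^ (v i))
        = X ^ (v i) * ((X : ℂ[X]) ^ (d - v i) - 1) := fun i => by
      rw [mul_sub, mul_one, ← pow_add, Nat.add_sub_cancel' (hvd i).le]
    have hfac : ∀ i : Fin n, ((X : ℂ[X]) ^ (v i) * ((X : ℂ[X]) ^ (d - v i) - 1)) ≠ 0 :=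
      fun i => mul_ne_zero (pow_ne_zero _ X_ne_zero)
        (auxXne (by have := hvd i; omega))
    have hC : ∏ i, ((X : ℂ[X]) ^ d - X ^ (v i))
        = (p.map (Int.castRingHom ℂ)) * ∏ i, ((X : ℂ[X]) ^ (v i) - 1) := by
      have := congrArg (Polynomial.map (Int.castRingHom ℂ)) hp
      simpa [Polynomial.map_prod] using this
    have hL : rootMultiplicity ζ (∏ i, ((X : ℂ[X]) ^ d - X ^ (v i)))
        = ∑ i : Fin n, (if m ∣ d - v i then 1 else 0) := by
      rw [Finset.prod_congr rfl fun i _ => key i,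
        auxRMprod _ _ (fun i _ => hfac i)]
      refine Finset.sum_congr rfl fun i _ => ?_
      rw [rootMultiplicity_mul (hfac i), auxRM (by have := hvd i; omega) hζ,
        rootMultiplicity_eq_zero (by simp [IsRoot.def, hζ0]), zero_add]
    have hR : rootMultiplicity ζ (∏ i, ((X : ℂ[X]) ^ (v i) - 1))
        = ∑ i : Fin n, (if m ∣ v i then 1 else 0) := by
      rw [auxRMprod _ _ (fun i _ => auxXne (hv i))]
      exact Finset.sum_congr rfl fun i _ => auxRM (hv i) hζ
    have hdvd : rootMultiplicity ζ (∏ i, ((X : ℂ[X]) ^ (v i) - 1))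
        ≤ rootMultiplicity ζ (∏ i, ((X : ℂ[X]) ^ d - X ^ (v i))) := by
      have hne : (p.map (Int.castRingHom ℂ)) * ∏ i, ((X : ℂ[X]) ^ (v i) - 1) ≠ 0 := by
        rw [← hC, Finset.prod_congr rfl fun i _ => key i]
        exact Finset.prod_ne_zero_iff.mpr fun i _ => hfac i
      rw [hC, rootMultiplicity_mul hne]
      exact Nat.le_add_left _ _
    rw [hL, hR] at hdvd
    calc (Finset.univ.filter (fun i => m ∣ v i)).card
        = ∑ i : Fin n, (if m ∣ v i then 1 else 0) := by rw [Finset.card_filter]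
      _ ≤ ∑ i : Fin n, (if m ∣ d - v i then 1 else 0) := hdvd
      _ = (Finset.univ.filter (fun k => m ∣ d - v k)).card := (Finset.card_filter _ _).symm
  · intro H
    set Φ : ℕ → Polynomial ℤ := fun m => cyclotomic m ℤ with hΦ
    set MQ : Multiset ℕ := Finset.univ.val.bind (fun i : Fin n => (v i).divisors.val) with hMQ
    set MP : Multiset ℕ := Finset.univ.val.bind (fun i : Fin n => (d - v i).divisors.val) with hMP
    have cnt : ∀ (m : ℕ) (s : Finset ℕ), s.val.count m = if m ∈ s then 1 else 0 := by
      intro m s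
      by_cases h : m ∈ s
      · rw [if_pos h]; exact Multiset.count_eq_one_of_mem s.nodup h
      · rw [if_neg h]; exact Multiset.count_eq_zero_of_notMem h
    have cntbind : ∀ (m : ℕ) (w : Fin n → ℕ),
        (Finset.univ.val.bind (fun i : Fin n => (w i).divisors.val)).count m
          = (Finset.univ.filter (fun i => m ∈ (w i).divisors)).card := by
      intro m w
      rw [Multiset.count_bind, Finset.card_filter]
      have : (Multiset.map (fun i => ((w i).divisors.val).count m) Finset.univ.val).sum
          = ∑ i : Fin n, ((w i).divisors.val).count m := rfl
      rw [this]
      exact Finset.sum_congr rfl fun i _ => cnt m _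
    have H' : ∀ m : ℕ, (Finset.univ.filter (fun i => m ∈ (v i).divisors)).card
        ≤ (Finset.univ.filter (fun i => m ∈ (d - v i).divisors)).card := by
      intro m
      rcases Nat.eq_zero_or_pos m with rfl | hm0
      · have h0 : ∀ a : ℕ, (0 : ℕ) ∉ a.divisors := fun a => by
          simp [Nat.mem_divisors, Nat.zero_dvd]
        simp [h0]
      · set J := Finset.univ.filter (fun i => m ∣ v i) with hJ
        have h1 : m ∣ Finset.gcd J v :=
          Finset.dvd_gcd fun i hi => (Finset.mem_filter.mp hi).2
        have h3 : (Finset.univ.filter (fun k => Finset.gcd J v ∣ d - v k))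
            ⊆ Finset.univ.filter (fun k => m ∣ d - v k) := by
          intro k hk
          rw [Finset.mem_filter] at hk ⊢
          exact ⟨hk.1, h1.trans hk.2⟩
        have e1 : Finset.univ.filter (fun i => m ∈ (v i).divisors) = J := by
          ext i; simp [hJ, Nat.mem_divisors, (hv i).ne']
        have e2 : Finset.univ.filter (fun i => m ∈ (d - v i).divisors)
            = Finset.univ.filter (fun k => m ∣ d - v k) := by
          ext i
          have : d - v i ≠ 0 := by have := hvd i; omega
          simp [Nat.mem_divisors, this]
        rw [e1, e2]
        exact le_trans (H J) (Finset.card_le_card h3)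
    have hle : MQ ≤ MP := by
      rw [Multiset.le_iff_count]
      intro m
      rw [hMQ, hMP, cntbind, cntbind]
      exact H' m
    obtain ⟨R, hRR⟩ := Multiset.le_iff_exists_add.mp hle
    have prodgen : ∀ w : Fin n → ℕ, (∀ i, 0 < w i) →
        ((Finset.univ.val.bind (fun i : Fin n => (w i).divisors.val)).map Φ).prod
          = ∏ i, ((X : Polynomial ℤ) ^ (w i) - 1) := by
      intro w hw
      rw [Multiset.map_bind, Multiset.prod_bind]
      have step : ∀ i : Fin n, (((w i).divisors.val).map Φ).prod
          = (X : Polynomial ℤ) ^ (w i) - 1 := fun i => by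
        have := prod_cyclotomic_eq_X_pow_sub_one (hw i) ℤ
        rw [← this]; rfl
      have : (Multiset.map (fun i => (((w i).divisors.val).map Φ).prod) Finset.univ.val).prod
          = ∏ i : Fin n, (((w i).divisors.val).map Φ).prod := rfl
      rw [this]
      exact Finset.prod_congr rfl fun i _ => step i
    have prodQ : (MQ.map Φ).prod = ∏ i, ((X : Polynomial ℤ) ^ (v i) - 1) := prodgen v hv
    have prodP : (MP.map Φ).prod = ∏ i, ((X : Polynomial ℤ) ^ (d - v i) - 1) :=
      prodgen (fun i => d - v i) (fun i => Nat.sub_pos_of_lt (hvd i))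
    refine ⟨(X : Polynomial ℤ) ^ (∑ i, v i) * (R.map Φ).prod, ?_⟩
    have keyZ : ∀ i, ((X : Polynomial ℤ) ^ d - X ^ (v i))
        = X ^ (v i) * ((X : Polynomial ℤ) ^ (d - v i) - 1) := fun i => by
      rw [mul_sub, mul_one, ← pow_add, Nat.add_sub_cancel' (hvd i).le]
    have e3 : ∏ i, ((X : Polynomial ℤ) ^ d - X ^ (v i))
        = (X : Polynomial ℤ) ^ (∑ i, v i) * ∏ i, ((X : Polynomial ℤ) ^ (d - v i) - 1) := by
      rw [Finset.prod_congr rfl fun i _ => keyZ i, Finset.prod_mul_distrib,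
        Finset.prod_pow_eq_pow_sum]
    have e4 : ∏ i, ((X : Polynomial ℤ) ^ (d - v i) - 1)
        = (R.map Φ).prod * ∏ i, ((X : Polynomial ℤ) ^ (v i) - 1) := by
      rw [← prodQ, ← prodP, hRR, Multiset.map_add, Multiset.prod_add, mul_comm]
    rw [e3, e4]; ring
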